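/- If a function Φ:(0,∞)→(0,∞), which is the Laplace exponent Φ(q) = βq + ∫₀^∞(1−e^{−qu})ν(du) of a Lévy measure ν with drift β ≥ 0, satisfies liminf_{x→∞} x·Φ(e^{−x}) > 0, then ∫₀^θ Φ(u)/u du = ∞ for every θ > 0, and consequently ν has no log moment: ∫₁^∞ ln(h) ν(dh) = ∞. -/

import Mathlib

open Real MeasureTheory Filter Set Topology

lemma hasDerivAt_negloglog {u : ℝ} (h0 : 0 < u) (h1 : u < 1) :
    HasDerivAt (fun v => -Real.log (-Real.log v)) (1 / (u * (-Real.log u))) u := by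
  have hlu : Real.log u < 0 := Real.log_neg h0 h1
  have h1' : HasDerivAt (fun v => -Real.log v) (-u⁻¹) u := (Real.hasDerivAt_log h0.ne').neg
  have h2' : HasDerivAt (fun v => Real.log (-Real.log v)) ((-Real.log u)⁻¹ * (-u⁻¹)) u := by
    have := (Real.hasDerivAt_log (x := -Real.log u) (by linarith)).comp u h1'
    simpa only [Function.comp_def] using this
  have := h2'.neg
  rw [show (1 / (u * (-Real.log u))) = -((-Real.log u)⁻¹ * (-u⁻¹)) by ring]
  exact this



lemma lintegral_div_neg_log_top {ε δ : ℝ} (hε : 0 < ε) (h0 : 0 < δ) (h1 : δ < 1) :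
    ∫⁻ u in Ioc (0:ℝ) δ, ENNReal.ofReal (ε / (u * (-Real.log u))) = ⊤ := by
  by_contra h
  set f : ℝ → ℝ := fun u => ε / (u * (-Real.log u)) with hf
  set I := ∫⁻ u in Ioc (0:ℝ) δ, ENNReal.ofReal (f u) with hIdef
  have hlogδ : 0 < -Real.log δ := by have := Real.log_neg h0 h1; linarith
  set Fδ : ℝ := -Real.log (-Real.log δ) with hFδ
  set t : ℝ := max (Real.log (-Real.log δ) + 1) (I.toReal / ε - Fδ + 1) with ht
  set a : ℝ := Real.exp (-Real.exp t) with ha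
  have ha0 : 0 < a := Real.exp_pos _
  have haδ : a < δ := by
    rw [ha, ← Real.exp_log h0]
    apply Real.exp_lt_exp.2
    have h2 : Real.log (-Real.log δ) < t := lt_of_lt_of_le (by linarith) (le_max_left _ _)
    have := (Real.exp_lt_exp.2 h2)
    rw [Real.exp_log hlogδ] at this
    linarith
  have haδ' : a ≤ δ := haδ.le
  have hmem : ∀ x ∈ Icc a δ, 0 < x ∧ x < 1 := fun x hx =>
    ⟨lt_of_lt_of_le ha0 hx.1, lt_of_le_of_lt hx.2 h1⟩
  have hdenom : ∀ x ∈ Icc a δ, 0 < x * (-Real.log x) := by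
    intro x hx
    obtain ⟨hx0, hx1⟩ := hmem x hx
    have := Real.log_neg hx0 hx1
    exact mul_pos hx0 (by linarith)
  have hcont : ContinuousOn f (Icc a δ) := by
    apply ContinuousOn.div continuousOn_const
    · exact continuousOn_id.mul ((Real.continuousOn_log.mono (fun x hx =>
        by simp [(hmem x hx).1.ne'])).neg)
    · exact fun x hx => (hdenom x hx).ne'
  have hii : IntervalIntegrable f volume a δ := by
    apply ContinuousOn.intervalIntegrable
    rwa [uIcc_of_le haδ']
  have hftc : ∫ x in a..δ, f x = ε * (-Real.log (-Real.log δ)) - ε * (-Real.log (-Real.log a)) := by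
    apply intervalIntegral.integral_eq_sub_of_hasDerivAt (f := fun v => ε * (-Real.log (-Real.log v)))
    · intro x hx
      rw [uIcc_of_le haδ'] at hx
      obtain ⟨hx0, hx1⟩ := hmem x hx
      have := (hasDerivAt_negloglog hx0 hx1).const_mul ε
      rw [show f x = ε * (1 / (x * (-Real.log x))) by rw [hf, mul_one_div]]
      exact this
    · exact hii
  have hFa : -Real.log (-Real.log a) = -t := by
    rw [ha, Real.log_exp]
    simp [Real.log_exp]
  have hval : ∫ x in a..δ, f x = ε * (Fδ + t) := by rw [hftc, hFa, hFδ]; ring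
  have hset : ∫ x in Ioc a δ, f x = ε * (Fδ + t) := by
    rw [← intervalIntegral.integral_of_le haδ', hval]
  have hnn : 0 ≤ᵐ[volume.restrict (Ioc a δ)] f :=
    (ae_restrict_iff' measurableSet_Ioc).2 (Filter.Eventually.of_forall (fun x hx =>
      le_of_lt (div_pos hε (hdenom x ⟨hx.1.le, hx.2⟩))))
  have heq : ENNReal.ofReal (ε * (Fδ + t)) = ∫⁻ x in Ioc a δ, ENNReal.ofReal (f x) := by
    rw [← hset]
    exact ofReal_integral_eq_lintegral_ofReal (hii.1.mono_set (by simp [Ioc_subset_Ioc_left])) hnn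
  have hle : ENNReal.ofReal (ε * (Fδ + t)) ≤ I := by
    rw [heq, hIdef]
    exact lintegral_mono_set (Ioc_subset_Ioc_left ha0.le)
  have hlt : I < ENNReal.ofReal (ε * (Fδ + t)) := by
    rw [ENNReal.lt_ofReal_iff_toReal_lt h]
    have h2 : I.toReal / ε - Fδ + 1 ≤ t := le_max_right _ _
    have : I.toReal / ε + 1 ≤ Fδ + t := by linarith
    calc I.toReal = ε * (I.toReal / ε) := by field_simp
    _ < ε * (Fδ + t) := by
        apply mul_lt_mul_of_pos_left _ hε
        linarith
  exact absurd hle (not_le.2 hlt)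


lemma nu_sigmaFinite (ν : Measure ℝ) (hν0 : ν (Iic 0) = 0)
    (hνint : ∫⁻ u, ENNReal.ofReal (min 1 u) ∂ν < ⊤) : SigmaFinite ν := by
  constructor
  refine ⟨⟨fun n => Iic 0 ∪ Ioi (1/((n:ℝ)+1)), fun _ => trivial, ?_, ?_⟩⟩
  · intro n
    set ε : ℝ := 1/((n:ℝ)+1) with hε'
    have hε : 0 < ε := by positivity
    have h1 : ν (Ioi ε) < ⊤ := by
      by_contra htop
      push_neg at htop
      have hb : ENNReal.ofReal (min 1 ε) * ν (Ioi ε) ≤ ∫⁻ u, ENNReal.ofReal (min 1 u) ∂ν := by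
        rw [← setLIntegral_const (Ioi ε) (ENNReal.ofReal (min 1 ε))]
        calc ∫⁻ x in Ioi ε, ENNReal.ofReal (min 1 ε) ∂ν
            ≤ ∫⁻ x in Ioi ε, ENNReal.ofReal (min 1 x) ∂ν := by
              apply setLIntegral_mono ((measurable_const.min measurable_id).ennreal_ofReal)
              intro x hx
              exact ENNReal.ofReal_le_ofReal (min_le_min le_rfl (le_of_lt hx))
          _ ≤ ∫⁻ x, ENNReal.ofReal (min 1 x) ∂ν := setLIntegral_le_lintegral _ _
      rw [top_le_iff.1 htop, ENNReal.mul_top] at hb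
      · exact hνint.ne (top_le_iff.1 hb)
      · simp only [ne_eq, ENNReal.ofReal_eq_zero, not_le]
        exact lt_min one_pos hε
    calc ν (Iic 0 ∪ Ioi ε) ≤ ν (Iic 0) + ν (Ioi ε) := measure_union_le _ _
      _ < ⊤ := by rw [hν0, zero_add]; exact h1
  · ext x
    simp only [mem_iUnion, mem_union, mem_Iic, mem_Ioi, mem_univ, iff_true]
    rcases le_or_gt x 0 with h | h
    · exact ⟨0, Or.inl h⟩
    · obtain ⟨n, hn⟩ := exists_nat_one_div_lt h
      exact ⟨n, Or.inr hn⟩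

lemma inner_bound {w : ℝ} (hw : 0 < w) :
    ∫⁻ u in Ioc (0:ℝ) 1, ENNReal.ofReal ((1 - Real.exp (-u * w)) / u)
      ≤ ENNReal.ofReal (min 1 w) + ENNReal.ofReal (max 0 (Real.log w)) := by
  have key : ∀ u : ℝ, 0 < u → (1 - Real.exp (-u*w)) / u ≤ w := by
    intro u hu
    rw [div_le_iff₀ hu]
    have h := Real.add_one_le_exp (-(u*w))
    have heq : -u * w = -(u*w) := by ring
    rw [heq]
    nlinarith
  have key2 : ∀ u : ℝ, 0 < u → (1 - Real.exp (-u*w)) / u ≤ 1/u := by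
    intro u hu
    gcongr
    nlinarith [Real.exp_pos (-u*w)]
  have vol1 : volume (Ioc (0:ℝ) 1) = 1 := by
    rw [Real.volume_Ioc]; simp
  rcases le_or_gt w 1 with hw1 | hw1
  · calc ∫⁻ u in Ioc (0:ℝ) 1, ENNReal.ofReal ((1 - Real.exp (-u * w)) / u)
        ≤ ∫⁻ _ in Ioc (0:ℝ) 1, ENNReal.ofReal w := by
          apply setLIntegral_mono measurable_const
          exact fun u hu => ENNReal.ofReal_le_ofReal (key u hu.1)
      _ = ENNReal.ofReal w := by rw [setLIntegral_const, vol1, mul_one]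
      _ = ENNReal.ofReal (min 1 w) := by rw [min_eq_right hw1]
      _ ≤ _ := le_self_add
  · have hinv0 : 0 < 1/w := by positivity
    have hinv1 : 1/w ≤ 1 := by rw [div_le_one (by linarith)]; linarith
    have hsplit : Ioc (0:ℝ) 1 = Ioc 0 (1/w) ∪ Ioc (1/w) 1 :=
      (Ioc_union_Ioc_eq_Ioc hinv0.le hinv1).symm
    rw [hsplit, lintegral_union measurableSet_Ioc (Ioc_disjoint_Ioc_of_le le_rfl)]
    have piece1 : ∫⁻ u in Ioc (0:ℝ) (1/w), ENNReal.ofReal ((1 - Real.exp (-u * w)) / u)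
        ≤ ENNReal.ofReal (min 1 w) := by
      calc ∫⁻ u in Ioc (0:ℝ) (1/w), ENNReal.ofReal ((1 - Real.exp (-u * w)) / u)
          ≤ ∫⁻ _ in Ioc (0:ℝ) (1/w), ENNReal.ofReal w := by
            apply setLIntegral_mono measurable_const
            exact fun u hu => ENNReal.ofReal_le_ofReal (key u hu.1)
        _ = ENNReal.ofReal w * ENNReal.ofReal (1/w) := by
            rw [setLIntegral_const, Real.volume_Ioc, sub_zero]
        _ = ENNReal.ofReal (w * (1/w)) := (ENNReal.ofReal_mul (by linarith)).symm
        _ = ENNReal.ofReal (min 1 w) := by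
            rw [mul_one_div_cancel (by linarith), min_eq_left hw1.le]
    have piece2 : ∫⁻ u in Ioc (1/w) 1, ENNReal.ofReal ((1 - Real.exp (-u * w)) / u)
        ≤ ENNReal.ofReal (max 0 (Real.log w)) := by
      have hii : IntervalIntegrable (fun u => 1/u) volume (1/w) 1 := by
        apply ContinuousOn.intervalIntegrable
        apply ContinuousOn.div continuousOn_const continuousOn_id
        intro x hx
        rw [uIcc_of_le hinv1] at hx
        exact (lt_of_lt_of_le hinv0 hx.1).ne'
      have hcomp : ∫⁻ u in Ioc (1/w) 1, ENNReal.ofReal (1/u) = ENNReal.ofReal (Real.log w) := by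
        rw [← ofReal_integral_eq_lintegral_ofReal hii.1]
        · congr 1
          rw [← intervalIntegral.integral_of_le hinv1, integral_one_div]
          · rw [one_div_one_div]
          · rw [uIcc_of_le hinv1]
            intro hc
            exact absurd hc.1 (not_le.2 hinv0)
        · apply (ae_restrict_iff' measurableSet_Ioc).2
          exact Filter.Eventually.of_forall (fun x hx => le_of_lt (div_pos one_pos (lt_trans hinv0 hx.1)))
      calc ∫⁻ u in Ioc (1/w) 1, ENNReal.ofReal ((1 - Real.exp (-u * w)) / u)
          ≤ ∫⁻ u in Ioc (1/w) 1, ENNReal.ofReal (1/u) := by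
            apply setLIntegral_mono (measurable_const.div measurable_id).ennreal_ofReal
            exact fun u hu => ENNReal.ofReal_le_ofReal (key2 u (lt_of_lt_of_le hinv0 hu.1.le))
        _ = ENNReal.ofReal (Real.log w) := hcomp
        _ ≤ ENNReal.ofReal (max 0 (Real.log w)) := ENNReal.ofReal_le_ofReal (le_max_right _ _)
    exact add_le_add piece1 piece2

/-- if `liminf_{x→∞} x Φ(e^{−x}) > 0` then `∫₀^θ Φ(u)/u du = ∞`
for every θ > 0, and ν has no log moment. -/
theorem stmt_12
    (ν : Measure ℝ) (β : ℝ) (hβ : 0 ≤ β)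
    (hν0 : ν (Iic 0) = 0)
    (hνint : ∫⁻ u, ENNReal.ofReal (min 1 u) ∂ν < ⊤)
    (Φ : ℝ → ℝ)
    (hΦ : ∀ q, 0 ≤ q → Φ q = β * q + ∫ u, (1 - Real.exp (-q * u)) ∂ν)
    (hliminf : ∃ ε > (0:ℝ), ∀ᶠ x in atTop, ε ≤ x * Φ (Real.exp (-x))) :
    (∀ θ > (0:ℝ), ∫⁻ u in Ioc (0:ℝ) θ, ENNReal.ofReal (Φ u / u) = ⊤) ∧
    ∫⁻ h in Ioi (1:ℝ), ENNReal.ofReal (Real.log h) ∂ν = ⊤ := by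
  obtain ⟨ε, hε, hev⟩ := hliminf
  obtain ⟨M, hM⟩ := eventually_atTop.1 hev
  -- Part 1
  have part1 : ∀ θ > (0:ℝ), ∫⁻ u in Ioc (0:ℝ) θ, ENNReal.ofReal (Φ u / u) = ⊤ := by
    intro θ hθ
    set δ : ℝ := min θ (min (1/2) (Real.exp (-(max M 1)))) with hδdef
    have hδ0 : 0 < δ := lt_min hθ (lt_min (by norm_num) (Real.exp_pos _))
    have hδ1 : δ < 1 := lt_of_le_of_lt (le_trans (min_le_right _ _) (min_le_left _ _)) (by norm_num)
    have hδθ : δ ≤ θ := min_le_left _ _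
    have hδM : δ ≤ Real.exp (-(max M 1)) := le_trans (min_le_right _ _) (min_le_right _ _)
    -- pointwise lower bound on Ioc 0 δ
    have hpw : ∀ u ∈ Ioc (0:ℝ) δ, ε / (u * (-Real.log u)) ≤ Φ u / u := by
      intro u hu
      obtain ⟨hu0, huδ⟩ := hu
      set x : ℝ := -Real.log u with hx
      have hxM : max M 1 ≤ x := by
        have := Real.log_le_log hu0 (le_trans huδ hδM)
        rw [Real.log_exp] at this
        simpa [hx] using neg_le_neg this
      have hx1 : (1:ℝ) ≤ x := le_trans (le_max_right _ _) hxM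
      have hx0 : 0 < x := lt_of_lt_of_le one_pos hx1
      have hΦx : ε ≤ x * Φ u := by
        have := hM x (le_trans (le_max_left _ _) hxM)
        rwa [hx, neg_neg, Real.exp_log hu0] at this
      rw [div_le_div_iff₀ (by positivity) hu0]
      calc ε * u ≤ (x * Φ u) * u := by nlinarith
        _ = Φ u * (u * x) := by ring
    have hchain : (∫⁻ u in Ioc (0:ℝ) δ, ENNReal.ofReal (ε / (u * (-Real.log u))))
        ≤ ∫⁻ u in Ioc (0:ℝ) θ, ENNReal.ofReal (Φ u / u) := by
      refine le_trans ?_ (lintegral_mono_set (Ioc_subset_Ioc_right hδθ))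
      apply lintegral_mono_ae
      apply (ae_restrict_iff' measurableSet_Ioc).2
      exact Filter.Eventually.of_forall (fun u hu => ENNReal.ofReal_le_ofReal (hpw u hu))
    rw [lintegral_div_neg_log_top hε hδ0 hδ1] at hchain
    exact top_le_iff.1 hchain
  refine ⟨part1, ?_⟩
  -- Part 2
  by_contra h2
  haveI : SigmaFinite ν := nu_sigmaFinite ν hν0 hνint
  have hae : ∀ᵐ w ∂ν, 0 < w := by
    rw [ae_iff]
    convert hν0 using 2
    ext w
    simp [not_lt]
  set F : ℝ → ℝ → ENNReal := fun u w => ENNReal.ofReal ((1 - Real.exp (-u*w))/u) with hF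
  have measF : Measurable (Function.uncurry F) := by
    have : Function.uncurry F = fun p : ℝ × ℝ =>
        ENNReal.ofReal ((1 - Real.exp (-p.1 * p.2)) / p.1) := rfl
    rw [this]
    exact ((measurable_const.sub ((measurable_fst.neg.mul measurable_snd).exp)).div
      measurable_fst).ennreal_ofReal
  have step1 : ∫⁻ u in Ioc (0:ℝ) 1, ENNReal.ofReal (Φ u / u)
      ≤ ∫⁻ u in Ioc (0:ℝ) 1, (ENNReal.ofReal β + ∫⁻ w, F u w ∂ν) := by
    apply setLIntegral_mono (measurable_const.add (Measurable.lintegral_prod_right measF))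
    intro u hu
    have hu0 : 0 < u := hu.1
    rw [hΦ u hu0.le]
    have hrw : (β * u + ∫ w, (1 - Real.exp (-u * w)) ∂ν) / u
        = β + ∫ w, (1 - Real.exp (-u * w)) / u ∂ν := by
      rw [add_div, mul_div_assoc, div_self hu0.ne', mul_one, ← integral_div]
    rw [hrw]
    refine le_trans ENNReal.ofReal_add_le ?_
    refine add_le_add le_rfl ?_
    by_cases hint : Integrable (fun w => (1 - Real.exp (-u*w))/u) ν
    · rw [ofReal_integral_eq_lintegral_ofReal hint]
      filter_upwards [hae] with w hw
      have : Real.exp (-u*w) ≤ 1 := Real.exp_le_one_iff.2 (by nlinarith)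
      exact div_nonneg (by linarith) hu0.le
    · rw [integral_undef hint]
      simp
  have vol1 : volume (Ioc (0:ℝ) 1) = 1 := by rw [Real.volume_Ioc]; simp
  have step2 : ∫⁻ u in Ioc (0:ℝ) 1, (ENNReal.ofReal β + ∫⁻ w, F u w ∂ν)
      = ENNReal.ofReal β + ∫⁻ u in Ioc (0:ℝ) 1, ∫⁻ w, F u w ∂ν := by
    rw [lintegral_add_left measurable_const, setLIntegral_const, vol1, mul_one]
  have step3 : ∫⁻ u in Ioc (0:ℝ) 1, ∫⁻ w, F u w ∂ν
      = ∫⁻ w, (∫⁻ u in Ioc (0:ℝ) 1, F u w) ∂ν :=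
    lintegral_lintegral_swap (measF.aemeasurable)
  have step4 : ∫⁻ w, (∫⁻ u in Ioc (0:ℝ) 1, F u w) ∂ν
      ≤ ∫⁻ w, (ENNReal.ofReal (min 1 w) + ENNReal.ofReal (max 0 (Real.log w))) ∂ν := by
    apply lintegral_mono_ae
    filter_upwards [hae] with w hw
    exact inner_bound hw
  have step5 : ∫⁻ w, (ENNReal.ofReal (min 1 w) + ENNReal.ofReal (max 0 (Real.log w))) ∂ν
      = (∫⁻ w, ENNReal.ofReal (min 1 w) ∂ν) + ∫⁻ w, ENNReal.ofReal (max 0 (Real.log w)) ∂ν :=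
    lintegral_add_left ((measurable_const.min measurable_id).ennreal_ofReal) _
  have step6 : ∫⁻ w, ENNReal.ofReal (max 0 (Real.log w)) ∂ν
      = ∫⁻ w in Ioi (1:ℝ), ENNReal.ofReal (Real.log w) ∂ν := by
    rw [← lintegral_indicator measurableSet_Ioi]
    apply lintegral_congr_ae
    filter_upwards [hae] with w hw
    rcases le_or_gt w 1 with h | h
    · rw [indicator_of_notMem (by simpa using h)]
      rw [max_eq_left (Real.log_nonpos hw.le h)]
      simp
    · rw [indicator_of_mem (by simpa using h)]
      rw [max_eq_right (Real.log_nonneg h.le)]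
  have hfin : ∫⁻ u in Ioc (0:ℝ) 1, ENNReal.ofReal (Φ u / u) < ⊤ := by
    calc ∫⁻ u in Ioc (0:ℝ) 1, ENNReal.ofReal (Φ u / u)
        ≤ ENNReal.ofReal β + ((∫⁻ w, ENNReal.ofReal (min 1 w) ∂ν)
            + ∫⁻ w in Ioi (1:ℝ), ENNReal.ofReal (Real.log w) ∂ν) := by
          refine le_trans (step1.trans step2.le) ?_
          apply add_le_add le_rfl
          rw [step3]
          exact step4.trans (le_of_eq (step5.trans (by rw [step6])))
      _ < ⊤ := by
          apply ENNReal.add_lt_top.2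
          refine ⟨ENNReal.ofReal_lt_top, ENNReal.add_lt_top.2 ⟨hνint, ?_⟩⟩
          exact lt_top_iff_ne_top.2 h2
  exact absurd (part1 1 one_pos) hfin.ne
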